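/- There exist constants c and d such that for every ε, every n ≥ 2, and all strings x, y, z, p, q of length at most n: if C(p | [x,y,z]) < ε, C(q | [x,y,z]) < ε, C(y | [p,x]) < ε and C(z | [q,y]) < ε (i.e., (p,q) is an ε information transmission in the network with one source holding (x,y,z), channel p to a node holding x that needs y, and channel q to a node holding y that needs z), then C([p,q]) ≥ max{ C([y,z] | x), C(z|y) } − c·ε − d·log n. -/

import Mathlib

/-- Binary strings. -/
abbrev Str : Type := List Bool

/-- Pair encoding `[x,y] = 0^{|x|} 1 x y`. -/
def spair (x y : Str) : Str :=
  List.replicate x.length false ++ [true] ++ x ++ y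

/-- `U` is an optimal programming language: it is partial computable and every
partial computable programming language `F` is simulated by `U` via a prefix `t_F`. -/
def IsOptimal (U : Str × Str →. Str) : Prop :=
  Partrec U ∧
    ∀ F : Str × Str →. Str, Partrec F → ∃ t : Str, ∀ p x : Str, F (p, x) = U (t ++ p, x)

/-- Conditional Kolmogorov complexity `C(x|y)` with respect to `U`. -/
noncomputable def KC (U : Str × Str →. Str) (x y : Str) : ℕ :=
  sInf {n : ℕ | ∃ p : Str, p.length = n ∧ U (p, y) = Part.some x}

/-- Plain Kolmogorov complexity `C(x) = C(x|Λ)`. -/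
noncomputable def K (U : Str × Str →. Str) (x : Str) : ℕ := KC U x []

/-- Mutual information `I(x:y) = C(y) − C(y|x)` (as an integer). -/
noncomputable def MI (U : Str × Str →. Str) (x y : Str) : ℤ :=
  (K U y : ℤ) - (KC U y x : ℤ)

/-- Conditional mutual information `I(x:y|z) = C(y|z) − C(y|[x,z])` (as an integer). -/
noncomputable def MIc (U : Str × Str →. Str) (x y z : Str) : ℤ :=
  (KC U y z : ℤ) - (KC U y (spair x z) : ℤ)
-- primrec infrastructure tests
open Primrec in
lemma primrec_drop : Primrec₂ (fun n (l : Str) => l.drop n) := by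
  have : Primrec fun a : ℕ × Str => (fun l : Str => l.tail)^[a.1] a.2 :=
    Primrec.nat_iterate Primrec.fst Primrec.snd (Primrec.list_tail.comp .snd).to₂
  refine this.to₂.of_eq ?_
  intro n l
  induction n generalizing l with
  | zero => simp
  | succ k ih => rw [Function.iterate_succ_apply, ih, ← List.drop_one, List.drop_drop, Nat.add_comm]

lemma primrec_replicate : Primrec (fun n : ℕ => List.replicate n false) := by
  have : Primrec fun n : ℕ => (fun l : Str => false :: l)^[n] [] :=
    Primrec.nat_iterate .id (Primrec.const []) ((Primrec.list_cons.comp (Primrec.const false) .snd).to₂)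
  refine this.of_eq ?_
  intro n
  induction n with
  | zero => simp
  | succ k ih => rw [Function.iterate_succ_apply', ih, List.replicate_succ]

lemma primrec_take : Primrec₂ (fun n (l : Str) => l.take n) := by
  have h : Primrec fun a : ℕ × Str =>
      ((a.2.reverse.drop (a.2.length - a.1)).reverse) :=
    Primrec.list_reverse.comp
      (primrec_drop.comp
        (Primrec.nat_sub.comp (Primrec.list_length.comp .snd) .fst)
        (Primrec.list_reverse.comp .snd))
  refine h.to₂.of_eq ?_
  intro n l
  rw [← List.reverse_take, List.reverse_reverse]

def unpair1 (l : Str) : Str := (l.drop (l.idxOf true + 1)).take (l.idxOf true)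
def unpair2 (l : Str) : Str := (l.drop (l.idxOf true + 1)).drop (l.idxOf true)

lemma idx_spair (n : ℕ) (r : Str) : (List.replicate n false ++ true :: r).idxOf true = n := by
  induction n with
  | zero => simp
  | succ k ih => simpa [List.replicate_succ, List.idxOf_cons] using ih

lemma spair_eq (x y : Str) :
    spair x y = List.replicate x.length false ++ true :: (x ++ y) := by
  simp [spair]

lemma indexOf_spair (x y : Str) : (spair x y).idxOf true = x.length := by
  rw [spair_eq]; exact idx_spair _ _

lemma drop_spair (x y : Str) : (spair x y).drop (x.length + 1) = x ++ y := by
  have : spair x y = (List.replicate x.length false ++ [true]) ++ (x ++ y) := by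
    simp [spair]
  rw [this]
  have hl : (List.replicate x.length false ++ [true]).length = x.length + 1 := by simp
  rw [← hl, List.drop_left]

lemma unpair1_spair (x y : Str) : unpair1 (spair x y) = x := by
  rw [unpair1, indexOf_spair, drop_spair, List.take_left]

lemma unpair2_spair (x y : Str) : unpair2 (spair x y) = y := by
  rw [unpair2, indexOf_spair, drop_spair, List.drop_left]

lemma primrec_unpair1 : Primrec unpair1 :=
  primrec_take.comp (Primrec.list_idxOf.comp (Primrec.const true) .id)
    (primrec_drop.comp (Primrec.succ.comp (Primrec.list_idxOf.comp (Primrec.const true) .id)) .id)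

lemma primrec_unpair2 : Primrec unpair2 :=
  primrec_drop.comp (Primrec.list_idxOf.comp (Primrec.const true) .id)
    (primrec_drop.comp (Primrec.succ.comp (Primrec.list_idxOf.comp (Primrec.const true) .id)) .id)

lemma primrec_spair : Primrec₂ spair :=
  Primrec.list_append.comp
    (Primrec.list_append.comp
      (Primrec.list_append.comp (primrec_replicate.comp (Primrec.list_length.comp .fst))
        (Primrec.const [true])) .fst) .snd

lemma spair_length (x y : Str) : (spair x y).length = 2 * x.length + 1 + y.length := by
  simp [spair]; ring

lemma kc_exists {U : Str × Str →. Str} (hU : IsOptimal U) (x y : Str) :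
    ∃ p : Str, p.length = KC U x y ∧ U (p, y) = Part.some x := by
  obtain ⟨t, ht⟩ := hU.2 (fun a => Part.some a.1) Computable.fst
  have hne : {n : ℕ | ∃ p : Str, p.length = n ∧ U (p, y) = Part.some x}.Nonempty :=
    ⟨(t ++ x).length, t ++ x, rfl, (ht x y).symm⟩
  obtain ⟨p, hp, hUp⟩ := Nat.sInf_mem hne
  exact ⟨p, hp, hUp⟩

lemma kc_le_of_partrec {U : Str × Str →. Str} (hU : IsOptimal U) {F : Str × Str →. Str}
    (hF : Partrec F) :
    ∃ c : ℕ, ∀ p y x : Str, F (p, y) = Part.some x → KC U x y ≤ p.length + c := by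
  obtain ⟨t, ht⟩ := hU.2 F hF
  refine ⟨t.length, fun p y x h => Nat.sInf_le ⟨t ++ p, by simp [Nat.add_comm], ?_⟩⟩
  rw [← ht]; exact h

def FA (U : Str × Str →. Str) : Str × Str →. Str := fun a =>
  (U (unpair2 a.1, [])).bind fun pq => U (unpair1 a.1, spair (unpair2 pq) a.2)

lemma partrec_FA {U : Str × Str →. Str} (hU : Partrec U) : Partrec (FA U) := by
  refine Partrec.bind (hU.comp ?_) (hU.comp ?_)
  · exact ((primrec_unpair2.comp Primrec.fst).pair (Primrec.const ([] : Str))).to_comp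
  · exact ((primrec_unpair1.comp (Primrec.fst.comp Primrec.fst)).pair
      (primrec_spair.comp (primrec_unpair2.comp Primrec.snd)
        (Primrec.snd.comp Primrec.fst))).to_comp

lemma FA_eval {U : Str × Str →. Str} {s w0 p q y z : Str}
    (hw0 : U (w0, []) = Part.some (spair p q)) (hs : U (s, spair q y) = Part.some z) :
    FA U (spair s w0, y) = Part.some z := by
  simp only [FA, unpair1_spair, unpair2_spair, hw0, Part.bind_some]
  exact hs

def FB (U : Str × Str →. Str) : Str × Str →. Str := fun a =>
  (U (unpair2 (unpair2 a.1), [])).bind fun pq =>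
    (U (unpair1 a.1, spair (unpair1 pq) a.2)).bind fun y =>
      (U (unpair1 (unpair2 a.1), spair (unpair2 pq) y)).map fun z => spair y z

lemma partrec_FB {U : Str × Str →. Str} (hU : Partrec U) : Partrec (FB U) := by
  have hg3 : Computable₂ (fun (c : ((Str × Str) × Str) × Str) (z : Str) => spair c.2 z) :=
    (primrec_spair.comp (Primrec.snd.comp Primrec.fst) Primrec.snd).to_comp.to₂
  have hf3 : Partrec (fun c : ((Str × Str) × Str) × Str =>
      U (unpair1 (unpair2 c.1.1.1), spair (unpair2 c.1.2) c.2)) :=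
    hU.comp ((primrec_unpair1.comp (primrec_unpair2.comp
        (Primrec.fst.comp (Primrec.fst.comp Primrec.fst)))).pair
      (primrec_spair.comp (primrec_unpair2.comp (Primrec.snd.comp Primrec.fst))
        Primrec.snd)).to_comp
  have h3 : Partrec₂ (fun (b : (Str × Str) × Str) (y : Str) =>
      (U (unpair1 (unpair2 b.1.1), spair (unpair2 b.2) y)).map fun z => spair y z) :=
    hf3.map hg3
  have hf2 : Partrec (fun b : (Str × Str) × Str =>
      U (unpair1 b.1.1, spair (unpair1 b.2) b.1.2)) :=
    hU.comp ((primrec_unpair1.comp (Primrec.fst.comp Primrec.fst)).pair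
      (primrec_spair.comp (primrec_unpair1.comp Primrec.snd)
        (Primrec.snd.comp Primrec.fst))).to_comp
  have h2 : Partrec₂ (fun (a : Str × Str) (pq : Str) =>
      (U (unpair1 a.1, spair (unpair1 pq) a.2)).bind fun y =>
        (U (unpair1 (unpair2 a.1), spair (unpair2 pq) y)).map fun z => spair y z) :=
    hf2.bind h3
  have hf1 : Partrec (fun a : Str × Str => U (unpair2 (unpair2 a.1), [])) :=
    hU.comp ((primrec_unpair2.comp (primrec_unpair2.comp Primrec.fst)).pair
      (Primrec.const ([] : Str))).to_comp
  exact hf1.bind h2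

lemma FB_eval {U : Str × Str →. Str} {r s w0 p q x y z : Str}
    (hw0 : U (w0, []) = Part.some (spair p q))
    (hr : U (r, spair p x) = Part.some y)
    (hs : U (s, spair q y) = Part.some z) :
    FB U (spair r (spair s w0), x) = Part.some (spair y z) := by
  simp only [FB, unpair1_spair, unpair2_spair, hw0, Part.bind_some, hr, hs, Part.map_some]

lemma lemA {U : Str × Str →. Str} (hU : IsOptimal U) : ∃ cA : ℕ, ∀ p q y z : Str,
    KC U z y ≤ K U (spair p q) + 2 * KC U z (spair q y) + cA := by
  obtain ⟨c, hc⟩ := kc_le_of_partrec hU (partrec_FA hU.1)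
  refine ⟨c + 1, fun p q y z => ?_⟩
  obtain ⟨w0, hw0l, hw0⟩ := kc_exists hU (spair p q) []
  obtain ⟨s, hsl, hs⟩ := kc_exists hU z (spair q y)
  have h := hc (spair s w0) y z (FA_eval hw0 hs)
  rw [spair_length, hsl, hw0l] at h
  unfold K
  omega

lemma lemB {U : Str × Str →. Str} (hU : IsOptimal U) : ∃ cB : ℕ, ∀ p q x y z : Str,
    KC U (spair y z) x ≤ K U (spair p q) + 2 * KC U y (spair p x)
      + 2 * KC U z (spair q y) + cB := by
  obtain ⟨c, hc⟩ := kc_le_of_partrec hU (partrec_FB hU.1)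
  refine ⟨c + 2, fun p q x y z => ?_⟩
  obtain ⟨w0, hw0l, hw0⟩ := kc_exists hU (spair p q) []
  obtain ⟨r, hrl, hr⟩ := kc_exists hU y (spair p x)
  obtain ⟨s, hsl, hs⟩ := kc_exists hU z (spair q y)
  have h := hc (spair r (spair s w0)) x (spair y z) (FB_eval hw0 hr hs)
  rw [spair_length, spair_length, hsl, hw0l, hrl] at h
  unfold K
  omega

theorem stmt9 (U : Str × Str →. Str) (hU : IsOptimal U) :
    ∃ c d : ℕ, ∀ ε n : ℕ, 2 ≤ n → ∀ x y z p q : Str,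
      x.length ≤ n → y.length ≤ n → z.length ≤ n →
      p.length ≤ n → q.length ≤ n →
      KC U p (spair x (spair y z)) < ε →
      KC U q (spair x (spair y z)) < ε →
      KC U y (spair p x) < ε →
      KC U z (spair q y) < ε →
      (K U (spair p q) : ℤ) ≥
        (max (KC U (spair y z) x) (KC U z y) : ℤ) - c * ε - d * Nat.log 2 n := by
  obtain ⟨cA, hA⟩ := lemA hU
  obtain ⟨cB, hB⟩ := lemB hU
  refine ⟨cA + cB + 4, 0, fun ε n _ x y z p q _ _ _ _ _ _ _ h3 h4 => ?_⟩
  have hε : 1 ≤ ε := lt_of_le_of_lt (Nat.zero_le _) h3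
  have h1 : KC U z y ≤ K U (spair p q) + 2 * ε + cA := by
    have := hA p q y z; omega
  have h2 : KC U (spair y z) x ≤ K U (spair p q) + 4 * ε + cB := by
    have := hB p q x y z; omega
  have hce : cA + cB + 4 * ε ≤ (cA + cB + 4) * ε := by
    calc cA + cB + 4 * ε = (cA + cB) * 1 + 4 * ε := by ring
    _ ≤ (cA + cB) * ε + 4 * ε := by
        exact Nat.add_le_add_right (Nat.mul_le_mul_left _ hε) _
    _ = (cA + cB + 4) * ε := by ring
  have hmax : max (KC U (spair y z) x) (KC U z y) ≤
      K U (spair p q) + (cA + cB + 4) * ε := by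
    apply max_le <;> omega
  have := hmax
  push_cast
  push_cast at this
  linarith
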